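/- arXiv:1011.4242 — 2 statements merged into one kernel-verified Lean document; each statement's English description precedes it below -/
import Mathlib

section
/- Fix 0 < ε < 3/e − 1. For k ∈ ℕ, let X₁(k), X₂(k), … be i.i.d. Poisson random variables with mean (1+ε)·log k. Then for every constant C > 0, P(max_{1 ≤ i ≤ ⌊Ck⌋} X_i(k) ≤ 3·log k) → 1 as k → ∞. -/
open MeasureTheory ProbabilityTheory Filter Topology
open scoped ENNReal

open Real in
lemma aux_log3 : (13:ℝ)/12 ≤ Real.log 3 := by
  rw [Real.le_log_iff_exp_le (by norm_num : (0:ℝ) < 3)]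
  have h1 : Real.exp (13/12 : ℝ) = Real.exp 1 * Real.exp (1/12 : ℝ) := by
    rw [← Real.exp_add]; norm_num
  have h2 : Real.exp (1/12 : ℝ) ≤ 12/11 := by
    have h3 := Real.add_one_le_exp (-(1/12 : ℝ))
    have h4 : (11/12 : ℝ) ≤ Real.exp (-(1/12 : ℝ)) := by linarith
    have h5 : Real.exp (1/12 : ℝ) = (Real.exp (-(1/12:ℝ)))⁻¹ := by
      rw [← Real.exp_neg]; norm_num
    rw [h5]
    rw [inv_le_comm₀ (lt_of_lt_of_le (by norm_num) h4) (by norm_num)]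
    linarith
  have he := Real.exp_one_lt_d9
  rw [h1]
  nlinarith [Real.exp_pos (1/12 : ℝ)]

lemma aux_delta {ε : ℝ} (hε : 0 < ε) (hε' : ε < 3 / Real.exp 1 - 1) :
    0 < ε - 3 * Real.log (Real.exp 1 * (1 + ε) / 3) := by
  have he := Real.exp_one_gt_d9
  have hep := Real.exp_pos 1
  have h1ε : (0:ℝ) < 1 + ε := by linarith
  have hlog : Real.log (Real.exp 1 * (1 + ε) / 3)
      = 1 + Real.log (1 + ε) - Real.log 3 := by
    rw [Real.log_div (by positivity) (by norm_num), Real.log_mul (by positivity) (by positivity),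
      Real.log_exp]
  have hle : Real.log (1 + ε) ≤ ε := by
    have := Real.log_le_sub_one_of_pos h1ε
    linarith
  have h3 := aux_log3
  have h6e : 6 / Real.exp 1 < 9/4 := by
    rw [div_lt_iff₀ hep]; nlinarith
  have h2ε : 2 * ε < 6 / Real.exp 1 - 2 := by
    have : 3 / Real.exp 1 * 2 = 6 / Real.exp 1 := by ring
    linarith
  rw [hlog]
  nlinarith
open Real Finset

lemma aux_tail (lam : ℝ) (hlam : 0 ≤ lam) (m : ℕ) (hm0 : 0 < m) (hm : 2 * lam ≤ m) :
    1 - ∑ j ∈ Finset.range m, Real.exp (-lam) * lam ^ j / (Nat.factorial j)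
      ≤ 2 * (Real.exp (-lam) * lam ^ m / (Nat.factorial m)) := by
  set f : ℕ → ℝ := fun j => Real.exp (-lam) * lam ^ j / (Nat.factorial j) with hf
  have hfs : Summable f := by
    have := (Real.summable_pow_div_factorial lam).mul_left (Real.exp (-lam))
    refine this.congr fun j => ?_
    show _ = Real.exp (-lam) * lam ^ j / (Nat.factorial j); ring
  have htsum : ∑' j, f j = 1 := by
    have h1 : ∑' j, (lam ^ j / (Nat.factorial j) : ℝ) = Real.exp lam := by
      rw [Real.exp_eq_exp_ℝ, NormedSpace.exp_eq_tsum_div]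
    have h2 : ∑' j, f j = Real.exp (-lam) * ∑' j, (lam ^ j / (Nat.factorial j) : ℝ) := by
      rw [← tsum_mul_left]
      congr 1 with j
      rw [hf]; ring
    rw [h2, h1, ← Real.exp_add]; simp
  have hkey : 1 - ∑ j ∈ Finset.range m, f j = ∑' j, f (j + m) := by
    have := Summable.sum_add_tsum_nat_add m hfs
    rw [htsum] at this
    linarith
  rw [hkey]
  set c : ℝ := Real.exp (-lam) * lam ^ m / (Nat.factorial m) with hc
  have hm0' : (0:ℝ) < (m : ℝ) := by exact_mod_cast hm0
  have hterm : ∀ j : ℕ, f (j + m) ≤ c * (1/2) ^ j := by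
    intro j
    have hfac : ((Nat.factorial m : ℝ)) * (m : ℝ) ^ j ≤ (Nat.factorial (j + m) : ℝ) := by
      have h1 : Nat.factorial m * m ^ j ≤ Nat.factorial m * (m + 1) ^ j :=
        Nat.mul_le_mul_left _ (Nat.pow_le_pow_left (Nat.le_succ m) j)
      have h2 := Nat.factorial_mul_pow_le_factorial (m := m) (n := j)
      have h3 : Nat.factorial m * m ^ j ≤ Nat.factorial (m + j) := le_trans h1 h2
      rw [add_comm j m]
      exact_mod_cast h3
    have hden : (0:ℝ) < (Nat.factorial m : ℝ) * (m : ℝ) ^ j := by positivity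
    have h3 : lam ^ (j + m) / (Nat.factorial (j + m) : ℝ)
        ≤ lam ^ (j + m) / ((Nat.factorial m : ℝ) * (m : ℝ) ^ j) :=
      div_le_div_of_nonneg_left (by positivity) hden hfac
    have h4 : lam ^ (j + m) / ((Nat.factorial m : ℝ) * (m : ℝ) ^ j)
        = (lam ^ m / (Nat.factorial m : ℝ)) * (lam / m) ^ j := by
      rw [pow_add, div_pow]
      field_simp
    have h5 : (lam / m) ^ j ≤ (1/2 : ℝ) ^ j := by
      apply pow_le_pow_left₀ (by positivity)
      rw [div_le_div_iff₀ hm0' (by norm_num)]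
      linarith
    calc f (j + m) = Real.exp (-lam) * (lam ^ (j + m) / (Nat.factorial (j + m))) := by
          rw [hf]; ring
      _ ≤ Real.exp (-lam) * ((lam ^ m / (Nat.factorial m : ℝ)) * (1/2) ^ j) := by
          apply mul_le_mul_of_nonneg_left _ (Real.exp_pos _).le
          calc lam ^ (j + m) / (Nat.factorial (j + m) : ℝ)
              ≤ (lam ^ m / (Nat.factorial m : ℝ)) * (lam / m) ^ j := h3.trans_eq h4
            _ ≤ (lam ^ m / (Nat.factorial m : ℝ)) * (1/2) ^ j :=
                mul_le_mul_of_nonneg_left h5 (by positivity)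
      _ = c * (1/2) ^ j := by rw [hc]; ring
  have hsum2 : Summable (fun j : ℕ => c * (1/2:ℝ) ^ j) :=
    (summable_geometric_of_lt_one (by norm_num) (by norm_num)).mul_left c
  have hle := Summable.tsum_le_tsum hterm ((summable_nat_add_iff m).2 hfs) hsum2
  have heq : ∑' j : ℕ, c * (1/2:ℝ) ^ j = 2 * c := by
    rw [tsum_mul_left, tsum_geometric_of_lt_one (by norm_num) (by norm_num)]
    norm_num
    ring
  rw [heq] at hle
  exact hle
lemma aux_pow (lam : ℝ) (hlam : 0 ≤ lam) (m : ℕ) (hm0 : 0 < m) :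
    lam ^ m / (Nat.factorial m) ≤ (lam * Real.exp 1 / m) ^ m := by
  have hm0' : (0:ℝ) < (m : ℝ) := by exact_mod_cast hm0
  have hmm : ((m:ℝ)) ^ m / (Nat.factorial m) ≤ Real.exp m := by
    refine le_trans ?_ (Real.sum_le_exp_of_nonneg hm0'.le (m + 1))
    exact Finset.single_le_sum (f := fun i => (m:ℝ) ^ i / (Nat.factorial i))
      (fun i _ => by positivity) (Finset.self_mem_range_succ m)
  have h1 : lam ^ m / (Nat.factorial m) = (lam / m) ^ m * ((m:ℝ) ^ m / (Nat.factorial m)) := by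
    rw [div_pow]
    field_simp
  rw [h1]
  calc (lam / m) ^ m * ((m:ℝ) ^ m / (Nat.factorial m))
      ≤ (lam / m) ^ m * Real.exp m := mul_le_mul_of_nonneg_left hmm (by positivity)
    _ = (lam * Real.exp 1 / m) ^ m := by
        rw [← Real.exp_one_pow, ← mul_pow]
        congr 1
        ring

open MeasureTheory ProbabilityTheory Filter Topology
open scoped ENNReal

/-- Fix `0 < ε < 3/e - 1`. If, for each `k`, `X k 1, X k 2, …` are i.i.d. Poisson random
variables with mean `(1+ε)·log k`, then for every `C > 0`,
`P(max_{1 ≤ i ≤ ⌊Ck⌋} X k i ≤ 3·log k) → 1` as `k → ∞`. -/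
theorem stmt_5 {Ω : Type*} [MeasurableSpace Ω] (μ : Measure Ω) [IsProbabilityMeasure μ]
    (ε : ℝ) (hε : 0 < ε) (hε' : ε < 3 / Real.exp 1 - 1)
    (X : ℕ → ℕ → Ω → ℕ) (hmeas : ∀ k i, Measurable (X k i))
    (hindep : ∀ k, iIndepFun (X k) μ)
    (hpois : ∀ k : ℕ, 1 ≤ k → ∀ i j : ℕ, (μ {ω | X k i ω = j}).toReal
      = Real.exp (-((1 + ε) * Real.log k)) * ((1 + ε) * Real.log k) ^ j / Nat.factorial j) :
    ∀ C : ℝ, 0 < C →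
      Tendsto (fun k : ℕ =>
          μ {ω | ∀ i ∈ Finset.Icc 1 ⌊C * (k : ℝ)⌋₊, (X k i ω : ℝ) ≤ 3 * Real.log k})
        atTop (𝓝 (1 : ℝ≥0∞)) := by
  intro C hC
  have he9 := Real.exp_one_gt_d9
  have hep := Real.exp_pos 1
  have hεhalf : ε < 1/2 := by
    have h1 : 3 / Real.exp 1 < 3/2 := by
      rw [div_lt_div_iff₀ hep (by norm_num)]
      nlinarith
    linarith
  set q : ℝ := Real.exp 1 * (1 + ε) / 3 with hqdef
  have hq0 : 0 < q := by positivity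
  have hq1 : q < 1 := by
    rw [hqdef, div_lt_one (by norm_num)]
    have h1 : 1 + ε < 3 / Real.exp 1 := by linarith
    have := (lt_div_iff₀ hep).mp h1
    nlinarith
  set D : ℝ := ε - 3 * Real.log q with hDdef
  have hD : 0 < D := aux_delta hε hε'
  let A : ℕ → Set Ω := fun k =>
    {ω | ∀ i ∈ Finset.Icc 1 ⌊C * (k : ℝ)⌋₊, (X k i ω : ℝ) ≤ 3 * Real.log k}
  show Tendsto (fun k => μ (A k)) atTop (𝓝 1)
  have hAmeas : ∀ k, MeasurableSet (A k) := by
    intro k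
    have hA : A k = ⋂ i ∈ Finset.Icc 1 ⌊C * (k : ℝ)⌋₊,
        X k i ⁻¹' {n : ℕ | (n : ℝ) ≤ 3 * Real.log k} := by
      ext ω; simp [A]
    rw [hA]
    exact MeasurableSet.iInter fun i => MeasurableSet.iInter fun _ =>
      hmeas k i (MeasurableSet.of_discrete)
  -- main bound
  have hbound : ∀ᶠ k : ℕ in atTop,
      μ (A k)ᶜ ≤ ENNReal.ofReal (2 * C * (k : ℝ) ^ (-D)) := by
    filter_upwards [eventually_ge_atTop 2] with k hk2
    have hk1 : 1 ≤ k := le_trans one_le_two hk2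
    have hk0 : (0:ℝ) < (k : ℝ) := by positivity
    have hL : 0 < Real.log k := Real.log_pos (by exact_mod_cast hk2)
    set L := Real.log k with hLdef
    set lam := (1 + ε) * L with hlamdef
    have hlam : 0 < lam := by positivity
    set m : ℕ := ⌊3 * L⌋₊ + 1 with hmdef
    have hm0 : 0 < m := Nat.succ_pos _
    have hm0' : (0:ℝ) < (m : ℝ) := by exact_mod_cast hm0
    have hm3L : 3 * L ≤ (m : ℝ) := by
      have := Nat.lt_floor_add_one (3 * L)
      push_cast [hmdef]
      linarith
    have h2lam : 2 * lam ≤ (m : ℝ) := by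
      have : 2 * lam ≤ 3 * L := by nlinarith
      linarith
    set N : ℕ := ⌊C * (k : ℝ)⌋₊ with hNdef
    set B : ℕ → Set Ω := fun i => {ω | m ≤ X k i ω} with hBdef
    have hsub : (A k)ᶜ ⊆ ⋃ i ∈ Finset.Icc 1 N, B i := by
      intro ω hω
      simp only [A, Set.mem_compl_iff, Set.mem_setOf_eq, not_forall] at hω
      obtain ⟨i, hi, hgt⟩ := hω
      push_neg at hgt
      refine Set.mem_biUnion hi ?_
      have : ⌊3 * L⌋₊ < X k i ω := (Nat.floor_lt (by positivity)).mpr hgt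
      simpa [hBdef, hmdef] using this
    have htail : ∀ i : ℕ, (μ (B i)).toReal
        = 1 - ∑ j ∈ Finset.range m, Real.exp (-lam) * lam ^ j / (Nat.factorial j) := by
      intro i
      have hBeq : B i = (⋃ j ∈ Finset.range m, {ω | X k i ω = j})ᶜ := by
        ext ω
        simp only [hBdef, Set.mem_setOf_eq, Set.mem_compl_iff, Set.mem_iUnion,
          Finset.mem_range, not_exists]
        constructor
        · rintro h j hj rfl; omega
        · intro h
          by_contra hlt
          exact h _ (by omega) rfl
      have hdisj : ((Finset.range m : Finset ℕ) : Set ℕ).PairwiseDisjoint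
          (fun j => {ω | X k i ω = j}) := by
        intro a _ b _ hab
        exact Set.disjoint_left.mpr fun ω ha hb => hab (by
          simp only [Set.mem_setOf_eq] at ha hb; rw [← ha, ← hb])
      have hmeasj : ∀ j ∈ Finset.range m, MeasurableSet {ω | X k i ω = j} := by
        intro j _
        exact hmeas k i (measurableSet_singleton j)
      rw [hBeq, prob_compl_eq_one_sub (Finset.measurableSet_biUnion _ hmeasj),
        measure_biUnion_finset hdisj hmeasj,
        ENNReal.toReal_sub_of_le (by
          rw [← measure_biUnion_finset hdisj hmeasj]; exact prob_le_one) ENNReal.one_ne_top,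
        ENNReal.toReal_one, ENNReal.toReal_sum (fun j _ => measure_ne_top μ _)]
      congr 1
      refine Finset.sum_congr rfl fun j _ => ?_
      exact hpois k hk1 i j
    have hq_base : lam * Real.exp 1 / (m : ℝ) ≤ q := by
      rw [hqdef, div_le_div_iff₀ hm0' (by norm_num)]
      nlinarith
    have htailb : ∀ i : ℕ, (μ (B i)).toReal ≤ 2 * Real.exp (-(1 + D) * L) := by
      intro i
      rw [htail i]
      refine le_trans (aux_tail lam hlam.le m hm0 h2lam) ?_
      have s1 : lam ^ m / (Nat.factorial m) ≤ (lam * Real.exp 1 / m) ^ m :=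
        aux_pow lam hlam.le m hm0
      have s2 : (lam * Real.exp 1 / m) ^ m ≤ q ^ m :=
        pow_le_pow_left₀ (by positivity) hq_base m
      have s3 : (q : ℝ) ^ m ≤ q ^ (3 * L) := by
        rw [← Real.rpow_natCast q m]
        exact Real.rpow_le_rpow_of_exponent_ge hq0 hq1.le hm3L
      have s4 : Real.exp (-lam) * q ^ (3 * L) = Real.exp (-(1 + D) * L) := by
        rw [Real.rpow_def_of_pos hq0, ← Real.exp_add]
        congr 1
        rw [hlamdef, hDdef]
        ring
      have hexp0 : (0:ℝ) < Real.exp (-lam) := Real.exp_pos _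
      calc 2 * (Real.exp (-lam) * lam ^ m / (Nat.factorial m))
          = 2 * (Real.exp (-lam) * (lam ^ m / (Nat.factorial m))) := by ring
        _ ≤ 2 * (Real.exp (-lam) * (q ^ (3 * L))) := by
            have : lam ^ m / (Nat.factorial m) ≤ q ^ (3 * L) :=
              s1.trans (s2.trans s3)
            nlinarith
        _ = 2 * Real.exp (-(1 + D) * L) := by rw [s4]
    have hNle : (N : ℝ) ≤ C * (k : ℝ) := Nat.floor_le (by positivity)
    have hfinal : (μ (A k)ᶜ).toReal ≤ 2 * C * (k : ℝ) ^ (-D) := by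
      have step1 : μ (A k)ᶜ ≤ ∑ i ∈ Finset.Icc 1 N, μ (B i) :=
        le_trans (measure_mono hsub) (measure_biUnion_finset_le _ _)
      have hsumne : (∑ i ∈ Finset.Icc 1 N, μ (B i)) ≠ ⊤ :=
        ENNReal.sum_ne_top.mpr fun i _ => measure_ne_top μ _
      calc (μ (A k)ᶜ).toReal
          ≤ (∑ i ∈ Finset.Icc 1 N, μ (B i)).toReal := ENNReal.toReal_mono hsumne step1
        _ = ∑ i ∈ Finset.Icc 1 N, (μ (B i)).toReal :=
            ENNReal.toReal_sum fun i _ => measure_ne_top μ _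
        _ ≤ ∑ _i ∈ Finset.Icc 1 N, 2 * Real.exp (-(1 + D) * L) :=
            Finset.sum_le_sum fun i _ => htailb i
        _ = (N : ℝ) * (2 * Real.exp (-(1 + D) * L)) := by
            rw [Finset.sum_const, Nat.card_Icc]
            simp [nsmul_eq_mul]
        _ ≤ C * (k : ℝ) * (2 * Real.exp (-(1 + D) * L)) :=
            mul_le_mul_of_nonneg_right hNle (by positivity)
        _ = 2 * C * (k : ℝ) ^ (-D) := by
            rw [hLdef, show Real.exp (-(1 + D) * Real.log k)
                = (k : ℝ) ^ (-(1 + D)) by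
              rw [Real.rpow_def_of_pos hk0]; ring_nf]
            rw [show C * (k:ℝ) * (2 * (k:ℝ) ^ (-(1+D)))
                = 2 * C * ((k:ℝ) ^ (1:ℝ) * (k:ℝ) ^ (-(1+D))) by
              rw [Real.rpow_one]; ring]
            rw [← Real.rpow_add hk0]
            norm_num
    rw [ENNReal.le_ofReal_iff_toReal_le (measure_ne_top μ _) (by positivity)]
    exact hfinal
  -- conclude
  have hup : Tendsto (fun k : ℕ => ENNReal.ofReal (2 * C * (k : ℝ) ^ (-D))) atTop (𝓝 0) := by
    have hr : Tendsto (fun k : ℕ => 2 * C * (k : ℝ) ^ (-D)) atTop (𝓝 0) := by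
      have h1 : Tendsto (fun k : ℕ => ((k : ℝ)) ^ (-D)) atTop (𝓝 0) :=
        (tendsto_rpow_neg_atTop hD).comp tendsto_natCast_atTop_atTop
      simpa using h1.const_mul (2 * C)
    simpa using ENNReal.tendsto_ofReal hr
  have h0 : Tendsto (fun k : ℕ => μ (A k)ᶜ) atTop (𝓝 0) :=
    tendsto_of_tendsto_of_tendsto_of_le_of_le' tendsto_const_nhds hup
      (Eventually.of_forall fun k => zero_le) hbound
  have heq : ∀ k, μ (A k) = 1 - μ (A k)ᶜ := by
    intro k
    have := prob_compl_eq_one_sub (μ := μ) (hAmeas k).compl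
    rwa [compl_compl] at this
  simp only [heq]
  have := ENNReal.Tendsto.sub
    (tendsto_const_nhds : Tendsto (fun _ : ℕ => (1:ℝ≥0∞)) atTop (𝓝 1)) h0
    (Or.inl ENNReal.one_ne_top)
  simpa using this
end

section
/- Let A₁, A₂, … be i.i.d. nonnegative random variables with mean μ ∈ (0, ∞), and set L^{(n)} = Σ_{i=1}^n A_i. Then L^{(n)}/(μn) → 1 almost surely as n → ∞, and moreover (L^{(n)} − Σ_{i=1}^n A_i·1(A_i ≤ log n))/L^{(n)} → 0 almost surely as n → ∞. -/
open MeasureTheory ProbabilityTheory Filter Topology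

/-- For i.i.d. nonnegative random variables `A i` with mean `μA ∈ (0,∞)` and
`L n = Σ_{i<n} A i`: almost surely `L n/(μA·n) → 1` and
`(L n - Σ_{i<n} A i·1(A i ≤ log n))/L n → 0` as `n → ∞`. -/
theorem stmt_10 {Ω : Type*} [MeasurableSpace Ω] (μ : Measure Ω) [IsProbabilityMeasure μ]
    (A : ℕ → Ω → ℝ) (hmeas : ∀ i, Measurable (A i))
    (hnonneg : ∀ i ω, 0 ≤ A i ω)
    (hindep : iIndepFun A μ)
    (hident : ∀ i, IdentDistrib (A i) (A 0) μ μ)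
    (hint : Integrable (A 0) μ) (hmean : 0 < ∫ ω, A 0 ω ∂μ) :
    ∀ᵐ ω ∂μ,
      Tendsto (fun n : ℕ =>
          (∑ i ∈ Finset.range n, A i ω) / ((∫ ω', A 0 ω' ∂μ) * n)) atTop (𝓝 1) ∧
      Tendsto (fun n : ℕ =>
          ((∑ i ∈ Finset.range n, A i ω)
              - ∑ i ∈ Finset.range n, A i ω * (if A i ω ≤ Real.log n then 1 else 0))
            / ∑ i ∈ Finset.range n, A i ω) atTop (𝓝 0) := by
  set μA := ∫ ω, A 0 ω ∂μ with hμA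
  -- truncation functions
  set f : ℕ → ℝ → ℝ := fun M x => if (M : ℝ) < x then x else 0 with hf
  have hfmeas : ∀ M, Measurable (f M) := fun M =>
    Measurable.ite (measurableSet_lt measurable_const measurable_id)
      measurable_id measurable_const
  have hfabs : ∀ M x, |f M x| ≤ |x| := by
    intro M x
    simp only [hf]
    split_ifs <;> simp [abs_nonneg]
  have hpair : Pairwise (Function.onFun (IndepFun · · μ) A) := fun i j hij => hindep.indepFun hij
  -- SLLN for A
  have h1 := strong_law_ae_real A hint hpair hident
  -- SLLN for truncated tails
  have hBint : ∀ M, Integrable (f M ∘ A 0) μ := by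
    intro M
    refine hint.mono (((hfmeas M).comp (hmeas 0)).aestronglyMeasurable) ?_
    exact Filter.Eventually.of_forall fun ω => hfabs M (A 0 ω)
  set c : ℕ → ℝ := fun M => ∫ ω, (f M ∘ A 0) ω ∂μ with hc
  have h2 : ∀ᵐ ω ∂μ, ∀ M : ℕ,
      Tendsto (fun n : ℕ => (∑ i ∈ Finset.range n, f M (A i ω)) / n) atTop (𝓝 (c M)) := by
    rw [ae_all_iff]
    intro M
    have := strong_law_ae_real (fun i => f M ∘ A i) (hBint M)
      (fun i j hij => (hpair hij).comp (hfmeas M) (hfmeas M))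
      (fun i => (hident i).comp (hfmeas M))
    exact this
  -- c M → 0
  have hc0 : Tendsto c atTop (𝓝 0) := by
    have := MeasureTheory.tendsto_integral_of_dominated_convergence
      (F := fun M ω => (f M ∘ A 0) ω) (f := fun _ => (0 : ℝ)) (bound := fun ω => |A 0 ω|)
      (fun M => (((hfmeas M).comp (hmeas 0)).aestronglyMeasurable))
      hint.abs
      (fun M => Filter.Eventually.of_forall fun ω => hfabs M (A 0 ω))
      (Filter.Eventually.of_forall ?_)
    · simpa [hc] using this
    · intro ω
      obtain ⟨M₀, hM₀⟩ := exists_nat_ge (A 0 ω)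
      apply tendsto_const_nhds.congr' ?_
      filter_upwards [Filter.eventually_ge_atTop M₀] with M hM
      have : ¬ ((M : ℝ) < A 0 ω) := not_lt.2 (hM₀.trans (by exact_mod_cast hM))
      simp [hf, this]
  filter_upwards [h1, h2] with ω hω1 hω2
  have hLn := hω1  -- Tendsto (Σ A i / n) → μA
  constructor
  · -- Part 1
    have : Tendsto (fun n : ℕ => ((∑ i ∈ Finset.range n, A i ω) / n) / μA) atTop
        (𝓝 (μA / μA)) := hω1.div_const μA
    rw [div_self hmean.ne'] at this
    exact this.congr fun n => by rw [div_div, mul_comm]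
  · -- Part 2
    set S : ℕ → ℝ := fun n => ∑ i ∈ Finset.range n,
      (if Real.log n < A i ω then A i ω else 0) with hS
    have hSnonneg : ∀ n, 0 ≤ S n := fun n =>
      Finset.sum_nonneg fun i _ => by split_ifs with h; exacts [hnonneg i ω, le_rfl]
    -- S n / n → 0
    have hStend : Tendsto (fun n : ℕ => S n / n) atTop (𝓝 0) := by
      rw [tendsto_order]
      constructor
      · intro a ha
        filter_upwards with n
        exact lt_of_lt_of_le ha (div_nonneg (hSnonneg n) (Nat.cast_nonneg n))
      · intro a ha
        obtain ⟨M, hM⟩ : ∃ M : ℕ, c M < a / 2 := by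
          have := hc0.eventually (eventually_lt_nhds (by linarith : (0:ℝ) < a / 2))
          exact this.exists
        have hlog : ∀ᶠ n : ℕ in atTop, (M : ℝ) ≤ Real.log n := by
          have : Tendsto (fun n : ℕ => Real.log n) atTop atTop :=
            Real.tendsto_log_atTop.comp tendsto_natCast_atTop_atTop
          exact this.eventually_ge_atTop (M : ℝ)
        have hclose : ∀ᶠ n : ℕ in atTop,
            (∑ i ∈ Finset.range n, f M (A i ω)) / n < c M + a / 2 := by
          have := (hω2 M).eventually (eventually_lt_nhds (by linarith : c M < c M + a / 2))
          exact this
        filter_upwards [hlog, hclose] with n hn hn2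
        have hle : S n ≤ ∑ i ∈ Finset.range n, f M (A i ω) := by
          apply Finset.sum_le_sum
          intro i _
          simp only [hf]
          split_ifs with h1' h2'
          · exact le_refl _
          · exact absurd (lt_of_le_of_lt hn h1') h2'
          · exact hnonneg i ω
          · exact le_refl _
        have hdivle : S n / n ≤ (∑ i ∈ Finset.range n, f M (A i ω)) / n := by
          rcases Nat.eq_zero_or_pos n with h | h
          · simp [h, hS]
          · exact (div_le_div_iff_of_pos_right (by exact_mod_cast h)).2 hle
        calc S n / n ≤ (∑ i ∈ Finset.range n, f M (A i ω)) / n := hdivle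
          _ < c M + a / 2 := hn2
          _ < a := by linarith
    -- combine
    have htend : Tendsto (fun n : ℕ => (S n / n) / ((∑ i ∈ Finset.range n, A i ω) / n))
        atTop (𝓝 (0 / μA)) := hStend.div hω1 hmean.ne'
    rw [zero_div] at htend
    apply htend.congr'
    filter_upwards [Filter.eventually_ge_atTop 1] with n hn
    have hn0 : (n : ℝ) ≠ 0 := by positivity
    have hnum : (∑ i ∈ Finset.range n, A i ω)
        - (∑ i ∈ Finset.range n, A i ω * (if A i ω ≤ Real.log n then 1 else 0)) = S n := by
      rw [hS, ← Finset.sum_sub_distrib]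
      apply Finset.sum_congr rfl
      intro i _
      rcases le_or_gt (A i ω) (Real.log n) with h | h
      · simp [h, not_lt.2 h]
      · simp [h, not_le.2 h]
    rw [hnum]
    rcases eq_or_ne (∑ i ∈ Finset.range n, A i ω) 0 with h | h
    · simp [h]
    · field_simp
end
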